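/- arXiv:2107.09743 — 2 statements merged into one kernel-verified Lean document; each statement's English description precedes it below -/
import Mathlib

section
/- For all n ≥ 3, the values a(n-1, j) are non-decreasing in j for 1 ≤ j ≤ n-1; i.e., a(n-1, j-1) ≤ a(n-1, j) for 2 ≤ j ≤ n-1. -/
/-- `F n = (a n ·, b n ·, φ n)` from the recursive construction;
    `φ 1 := 1` by convention. -/
def F : ℕ → ((ℕ → ℚ) × (ℕ → ℚ) × ℚ)
  | 0 => (fun _ => 0, fun _ => 0, 1)
  | 1 => (fun j => if j = 1 then 1 else 0, fun j => if j = 1 then 1 else 0, 1)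
  | (n+2) =>
      let p := F (n+1)
      let th : ℚ := 3 * p.1 (n+1)
      let ph : ℚ := if n = 0 then 4
        else 4 * ∑ j ∈ Finset.Icc 1 (n+1), (th * p.2.1 j - 3 * p.1 j)
      (fun j => if j = n+2 then ph else 4 * p.1 j,
       fun j => if j = n+2 then 1 else (1 + th) * p.2.1 j,
       ph)

/-- coefficient `a(n,j)` -/
def a (n j : ℕ) : ℚ := (F n).1 j
/-- coefficient `b(n,j)` -/
def b (n j : ℕ) : ℚ := (F n).2.1 j
/-- `φ(n)` -/
def phi (n : ℕ) : ℚ := (F n).2.2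
/-- `θ(n) = 3·a(n-1,n-1)` -/
def theta (n : ℕ) : ℚ := 3 * a (n-1) (n-1)

lemma a_rec (n j : ℕ) : a (n+2) j = if j = n+2 then phi (n+2) else 4 * a (n+1) j := by
  simp [a, phi, F]

lemma b_rec (n j : ℕ) : b (n+2) j = if j = n+2 then 1 else (1 + 3 * a (n+1) (n+1)) * b (n+1) j := by
  simp [b, a, F]

lemma phi_rec (n : ℕ) : phi (n+3) =
    4 * ∑ j ∈ Finset.Icc 1 (n+2), (3 * a (n+2) (n+2) * b (n+2) j - 3 * a (n+2) j) := by
  simp [phi, a, b, F]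

lemma inv (n : ℕ) (hn : 2 ≤ n) :
    (∀ j, 1 ≤ j → j ≤ n → 0 < a n j) ∧
    (∀ j, 1 ≤ j → j ≤ n → 1 ≤ b n j) ∧
    2 ≤ b n 1 ∧
    (∀ i j, 1 ≤ i → i ≤ j → j ≤ n → a n i ≤ a n j) := by
  induction n, hn using Nat.le_induction with
  | base =>
    have ha : ∀ j, 1 ≤ j → j ≤ 2 → a 2 j = 4 := by
      intro j h1 h2
      interval_cases j <;> norm_num [a, F]
    have hb1 : b 2 1 = 4 := by norm_num [b, F]
    have hb2 : b 2 2 = 1 := by norm_num [b, F]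
    refine ⟨fun j h1 h2 => by rw [ha j h1 h2]; norm_num,
      fun j h1 h2 => ?_, by rw [hb1]; norm_num,
      fun i j hi hij hj => by rw [ha i hi (hij.trans hj), ha j (hi.trans hij) hj]⟩
    interval_cases j <;> simp [hb1, hb2]
  | succ n hn IH =>
    obtain ⟨k, rfl⟩ : ∃ k, n = k + 2 := ⟨n - 2, by omega⟩
    obtain ⟨hpos, hb, hb1, hmono⟩ := IH
    set A := a (k+2) (k+2) with hA
    have hApos : 0 < A := hpos (k+2) (by omega) le_rfl
    have hth : (0:ℚ) < 1 + 3 * A := by linarith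
    -- sum bound
    have hterm : ∀ j ∈ Finset.Icc 1 (k+2), (0:ℚ) ≤ 3 * A * b (k+2) j - 3 * a (k+2) j := by
      intro j hj
      rw [Finset.mem_Icc] at hj
      have h1 : a (k+2) j ≤ A := hmono j (k+2) hj.1 hj.2 le_rfl
      have h2 : 1 ≤ b (k+2) j := hb j hj.1 hj.2
      nlinarith
    have hsingle : 3 * A * b (k+2) 1 - 3 * a (k+2) 1 ≤
        ∑ j ∈ Finset.Icc 1 (k+2), (3 * A * b (k+2) j - 3 * a (k+2) j) :=
      Finset.single_le_sum hterm (by simp)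
    have ha1 : a (k+2) 1 ≤ A := hmono 1 (k+2) le_rfl (by omega) le_rfl
    have hsum : 3 * A ≤ ∑ j ∈ Finset.Icc 1 (k+2), (3 * A * b (k+2) j - 3 * a (k+2) j) := by
      have := hb1
      nlinarith
    have hphi : 12 * A ≤ phi (k+3) := by rw [phi_rec]; linarith
    have hphi4 : 4 * A ≤ phi (k+3) := by linarith
    have hphipos : 0 < phi (k+3) := by linarith
    refine ⟨?_, ?_, ?_, ?_⟩
    · intro j h1 h2
      rw [show k+2+1 = k+1+2 by ring, a_rec]
      split
      · exact hphipos
      · rename_i hne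
        exact mul_pos (by norm_num) (hpos j h1 (by omega))
    · intro j h1 h2
      rw [show k+2+1 = k+1+2 by ring, b_rec]
      split
      · norm_num
      · have hj : j ≤ k+2 := by omega
        have := hb j h1 hj
        nlinarith
    · rw [show k+2+1 = k+1+2 by ring, b_rec]
      have : (1:ℕ) ≠ k+1+2 := by omega
      rw [if_neg this]
      nlinarith
    · intro i j hi hij hj
      rw [show k+2+1 = k+1+2 by ring, a_rec (k+1) i, a_rec (k+1) j]
      rcases eq_or_lt_of_le hj with rfl | hj'
      · rw [if_pos rfl]
        split
        · exact le_rfl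
        · have hik : i ≤ k+2 := by omega
          have := hmono i (k+2) hi hik le_rfl
          linarith
      · have hjk : j ≤ k+2 := by omega
        have hik : i ≤ k+2 := by omega
        rw [if_neg (by omega : i ≠ k+1+2), if_neg (by omega : j ≠ k+1+2)]
        have := hmono i j hi hij hjk
        linarith

theorem a_monotone (n : ℕ) (hn : 3 ≤ n) :
    ∀ j : ℕ, 2 ≤ j → j ≤ n - 1 → a (n-1) (j-1) ≤ a (n-1) j := by
  intro j h2 hj
  obtain ⟨-, -, -, hmono⟩ := inv (n-1) (by omega)
  exact hmono (j-1) j (by omega) (by omega) hj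
end

section
/- For all n ≥ 3, φ(n-1) ≤ φ(n)/12, where φ(2) := 4. -/
lemma a_diag (n : ℕ) : a (n+1) (n+1) = phi (n+1) := by
  cases n with
  | zero => rfl
  | succ m => simp [a, phi, F]

lemma b_diag (n : ℕ) : b (n+1) (n+1) = 1 := by
  cases n with
  | zero => rfl
  | succ m => simp [b, F]

lemma theta_succ (n : ℕ) : theta (n+2) = 3 * phi (n+1) := by
  show 3 * a (n+1) (n+1) = _
  rw [a_diag]

lemma a_succ (n j : ℕ) (h : j ≠ n+2) : a (n+2) j = 4 * a (n+1) j := by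
  simp [a, F, h]

lemma b_succ (n j : ℕ) (h : j ≠ n+2) :
    b (n+2) j = (1 + theta (n+2)) * b (n+1) j := by
  simp [b, theta, a, F, h]

lemma phi_succ (n : ℕ) :
    phi (n+3) = 4 * ∑ j ∈ Finset.Icc 1 (n+2),
      (3 * phi (n+2) * b (n+2) j - 3 * a (n+2) j) := by
  have h1 : phi (n+3) = 4 * ∑ j ∈ Finset.Icc 1 (n+2),
      (theta (n+3) * b (n+2) j - 3 * a (n+2) j) := by
    simp [phi, theta, a, b, F]
  rw [h1, theta_succ (n+1)]

/-- inductive invariant -/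
def Q (m : ℕ) : Prop :=
  4 ≤ phi m ∧ 0 ≤ phi (m-1) ∧ (∀ j, 0 ≤ b m j) ∧
  (∀ j, 1 ≤ j → j ≤ m → a m j = 4^(m-j) * phi j) ∧
  (∀ j, 1 ≤ j → j ≤ m → 4^(m-j) * phi j ≤ phi m * b m j)

lemma Q_two : Q 2 := by
  refine ⟨by norm_num [phi, F], by norm_num [phi, F], ?_, ?_, ?_⟩
  · intro j
    simp only [b, F]
    split_ifs <;> norm_num
  · intro j hj1 hj2
    interval_cases j <;> norm_num [a, phi, F]
  · intro j hj1 hj2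
    interval_cases j <;> norm_num [b, phi, F]

lemma key_step (k : ℕ) (h : Q (k+2)) : 12 * phi (k+2) ≤ phi (k+3) := by
  obtain ⟨h4, h0, hb, ha, hineq⟩ := h
  have hterm : ∀ j ∈ Finset.Icc 1 (k+2),
      0 ≤ 3 * phi (k+2) * b (k+2) j - 3 * a (k+2) j := by
    intro j hj
    simp only [Finset.mem_Icc] at hj
    rw [ha j hj.1 hj.2]
    have := hineq j hj.1 hj.2
    linarith
  have hmem : k+1 ∈ Finset.Icc 1 (k+2) := by simp
  have hsingle := Finset.single_le_sum hterm hmem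
  have hbv : b (k+2) (k+1) = 1 + 3 * phi (k+1) := by
    rw [b_succ k (k+1) (by omega), theta_succ, b_diag]
    ring
  have hav : a (k+2) (k+1) = 4 * phi (k+1) := by
    rw [ha (k+1) (by omega) (by omega)]
    have : k+2-(k+1) = 1 := by omega
    rw [this]; ring
  have h0' : 0 ≤ phi (k+1) := h0
  have hterm_val : 3 * phi (k+2) ≤
      3 * phi (k+2) * b (k+2) (k+1) - 3 * a (k+2) (k+1) := by
    rw [hbv, hav]
    nlinarith
  rw [phi_succ]
  linarith [le_trans hterm_val hsingle]

lemma Q_succ (k : ℕ) (h : Q (k+2)) : Q (k+3) := by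
  have hkey := key_step k h
  obtain ⟨h4, h0, hb, ha, hineq⟩ := h
  have h4' : 4 ≤ phi (k+3) := by linarith
  refine ⟨h4', show (0:ℚ) ≤ phi (k+2) by linarith, ?_, ?_, ?_⟩
  · intro j
    by_cases hj : j = k+3
    · rw [hj]; rw [show k+3 = (k+2)+1 from rfl, b_diag]; norm_num
    · rw [b_succ (k+1) j hj, theta_succ]
      have := hb j
      nlinarith
  · intro j hj1 hj2
    by_cases hj : j = k+3
    · subst hj
      rw [show k+3 = (k+2)+1 from rfl, a_diag]
      simp
    · have hj2' : j ≤ k+2 := by omega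
      rw [a_succ (k+1) j hj, ha j hj1 hj2']
      have hs : k+3-j = (k+2-j)+1 := by omega
      rw [hs, pow_succ]; ring
  · intro j hj1 hj2
    by_cases hj : j = k+3
    · subst hj
      rw [show k+3 = (k+2)+1 from rfl, b_diag]
      simp
    · have hj2' : j ≤ k+2 := by omega
      rw [b_succ (k+1) j hj, theta_succ]
      have h1 := hineq j hj1 hj2'
      have h2 := hb j
      have hs : k+3-j = (k+2-j)+1 := by omega
      rw [hs, pow_succ]
      have hpos : (0:ℚ) ≤ phi (k+3) + 3 * phi (k+3) * phi (k+2) - 4 * phi (k+2) := by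
        nlinarith
      have := mul_nonneg h2 hpos
      nlinarith
  
lemma Q_all (k : ℕ) : Q (k+2) := by
  induction k with
  | zero => exact Q_two
  | succ m ih => exact Q_succ m ih

theorem phi_ratio (n : ℕ) (hn : 3 ≤ n) : phi (n-1) ≤ phi n / 12 := by
  obtain ⟨k, rfl⟩ : ∃ k, n = k+3 := ⟨n-3, by omega⟩
  have h := key_step k (Q_all k)
  show phi (k+2) ≤ phi (k+3) / 12
  rw [le_div_iff₀ (by norm_num : (0:ℚ) < 12)]
  linarith
end
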